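/- Let $(\Omega, \mu)$ be a standard probability space, $L:\Omega\to\Omega$ ergodic measure-preserving, $f:\Omega\to\mathbf{R}$ measurable, $S_n = \sum_{k=0}^{n-1} f\circ L^k$, and $0<p<1$. If $|f|^p$ is integrable, then $\lim_{n\to\infty} n^{-1/p} S_n = 0$ almost surely. -/

import Mathlib

open MeasureTheory Filter Topology Set
open scoped ENNReal

lemma mz_step {p : ℝ} (hp : 0 < p) (hp1 : p < 1) :
    ∃ C : ℝ, 0 < C ∧ ∀ x : ℝ, 1 ≤ x →
      (x+1) ^ (-(1/p)) ≤ C * (x ^ (-(1/p - 1)) - (x+1) ^ (-(1/p - 1))) := by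
  set q : ℝ := 1/p - 1 with hq_def
  have hq : 0 < q := by
    have : 1 < 1/p := one_lt_one_div hp hp1
    rw [hq_def]; linarith
  set N : ℕ := ⌈1/q⌉₊ with hN_def
  have hN1 : 1 ≤ N := Nat.one_le_iff_ne_zero.2 (by
    simp only [hN_def, ne_eq, Nat.ceil_eq_zero, not_le]
    positivity)
  have hNq : 1/(N:ℝ) ≤ q := by
    have h1 : (1:ℝ)/q ≤ N := Nat.le_ceil _
    rw [div_le_iff₀ (by positivity)]
    have h2 : 1 ≤ (N:ℝ) * q := (div_le_iff₀ hq).1 h1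
    linarith
  refine ⟨2*N, by positivity, fun x hx => ?_⟩
  have hx0 : (0:ℝ) < x := by linarith
  have hx10 : (0:ℝ) < x + 1 := by linarith
  set u : ℝ := x/(x+1) with hu_def
  have hu0 : 0 < u := by positivity
  have hu1 : u ≤ 1 := by rw [hu_def, div_le_one hx10]; linarith
  have huinv : u⁻¹ = (x+1)/x := by rw [hu_def]; field_simp
  have huinv2 : u⁻¹ ≤ 2 := by rw [huinv, div_le_iff₀ hx0]; linarith
  set w : ℝ := u ^ (-(1/(N:ℝ))) with hw_def
  have hw1 : 1 ≤ w := by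
    have := Real.rpow_le_rpow_of_exponent_ge hu0 hu1 (neg_nonpos.2 (by positivity) : -(1/(N:ℝ)) ≤ 0)
    simpa [hw_def] using this
  have hwN : w ^ N = u⁻¹ := by
    rw [hw_def, ← Real.rpow_natCast (u ^ (-(1/(N:ℝ)))) N, ← Real.rpow_mul hu0.le]
    have : -(1/(N:ℝ)) * N = -1 := by
      field_simp
    rw [this, Real.rpow_neg_one]
  -- w - 1 ≥ (u⁻¹ - 1) / (2N)
  have hgeom : u⁻¹ - 1 ≤ (w - 1) * (2*N) := by
    have hsum : ∑ i ∈ Finset.range N, w ^ i ≤ 2*N := by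
      calc ∑ i ∈ Finset.range N, w ^ i ≤ ∑ _i ∈ Finset.range N, (2:ℝ) := by
            refine Finset.sum_le_sum fun i hi => ?_
            calc w ^ i ≤ w ^ N :=
                  pow_le_pow_right₀ hw1 (Finset.mem_range.1 hi).le
            _ = u⁻¹ := hwN
            _ ≤ 2 := huinv2
      _ = 2*N := by simp [mul_comm]
    have hid : (w - 1) * ∑ i ∈ Finset.range N, w ^ i = w ^ N - 1 := by
      rw [mul_comm]; exact geom_sum_mul w N
    have hw0 : 0 ≤ w - 1 := by linarith
    calc u⁻¹ - 1 = w ^ N - 1 := by rw [hwN]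
    _ = (w - 1) * ∑ i ∈ Finset.range N, w ^ i := hid.symm
    _ ≤ (w - 1) * (2*N) := by
        apply mul_le_mul_of_nonneg_left hsum hw0
  have hwq : w ≤ u ^ (-q) := by
    rw [hw_def]
    exact Real.rpow_le_rpow_of_exponent_ge hu0 hu1 (by linarith)
  -- (x+1)⁻¹ ≤ 2N (u^{-q} - 1)
  have hkey : (x+1)⁻¹ ≤ 2*N * (u ^ (-q) - 1) := by
    have h1 : (x+1)⁻¹ ≤ u⁻¹ - 1 := by
      have h2 : u⁻¹ - 1 = x⁻¹ := by rw [huinv]; field_simp; ring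
      rw [h2]
      exact inv_anti₀ hx0 (by linarith)
    calc (x+1)⁻¹ ≤ u⁻¹ - 1 := h1
    _ ≤ (w - 1) * (2*N) := hgeom
    _ ≤ (u ^ (-q) - 1) * (2*N) := by
        apply mul_le_mul_of_nonneg_right (by linarith) (by positivity)
    _ = 2*N * (u ^ (-q) - 1) := by ring
  -- now convert
  have hxq : x ^ (-q) = (x+1) ^ (-q) * u ^ (-q) := by
    have h3 : (x+1) * u = x := by rw [hu_def]; field_simp
    conv_lhs => rw [← h3]
    rw [Real.mul_rpow hx10.le hu0.le]
  have hsplit : (x+1) ^ (-(1/p)) = (x+1) ^ (-q) * (x+1)⁻¹ := by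
    rw [show -(1/p) = -q + (-1) from by rw [hq_def]; ring, Real.rpow_add hx10,
      Real.rpow_neg_one]
  rw [hsplit, hxq]
  have hb : 0 < (x+1) ^ (-q) := Real.rpow_pos_of_pos hx10 _
  calc (x+1) ^ (-q) * (x+1)⁻¹ ≤ (x+1) ^ (-q) * (2*N * (u ^ (-q) - 1)) :=
        mul_le_mul_of_nonneg_left hkey hb.le
  _ = 2*N * ((x+1) ^ (-q) * u ^ (-q) - (x+1) ^ (-q)) := by ring

lemma mz_tail {p : ℝ} (hp : 0 < p) (hp1 : p < 1) :
    ∃ D : ℝ, 0 < D ∧ ∀ K : ℕ,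
      (Summable fun j : ℕ => ((K:ℝ) + j + 1) ^ (-(1/p))) ∧
      ∑' j : ℕ, ((K:ℝ) + j + 1) ^ (-(1/p)) ≤ D * ((K:ℝ) + 1) ^ (-(1/p - 1)) := by
  obtain ⟨C, hC, hstep⟩ := mz_step hp hp1
  set q : ℝ := 1/p - 1 with hq_def
  have hq : 0 < q := by
    have : 1 < 1/p := one_lt_one_div hp hp1
    rw [hq_def]; linarith
  refine ⟨C + 1, by positivity, fun K => ?_⟩
  set t : ℕ → ℝ := fun j => ((K:ℝ) + j + 1) ^ (-(1/p)) with ht_def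
  set w : ℕ → ℝ := fun j => ((K:ℝ) + j + 1) ^ (-q) with hw_def
  have hterm_nonneg : ∀ j : ℕ, 0 ≤ t j := fun j =>
    Real.rpow_nonneg (by positivity) _
  have hK1 : (1:ℝ) ≤ (K:ℝ) + 1 := by
    have : (0:ℝ) ≤ (K:ℝ) := Nat.cast_nonneg K
    linarith
  have hw_nonneg : ∀ j : ℕ, 0 ≤ w j := fun j => Real.rpow_nonneg (by positivity) _
  have hw0 : w 0 = ((K:ℝ) + 1) ^ (-q) := by simp [hw_def]
  have hpartial : ∀ n : ℕ, ∑ j ∈ Finset.range n, t j ≤ (C + 1) * ((K:ℝ) + 1) ^ (-q) := by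
    intro n
    have hpos : (0:ℝ) < ((K:ℝ) + 1) ^ (-q) := Real.rpow_pos_of_pos (by positivity) _
    cases n with
    | zero => simp; positivity
    | succ m =>
      rw [Finset.sum_range_succ']
      have h0 : t 0 ≤ ((K:ℝ) + 1) ^ (-q) := by
        have he : ((K:ℝ) + (0:ℕ) + 1) = (K:ℝ) + 1 := by norm_num
        rw [ht_def]
        simp only [he]
        exact Real.rpow_le_rpow_of_exponent_le hK1 (by rw [hq_def]; linarith)
      have h1 : ∑ j ∈ Finset.range m, t (j+1) ≤ C * ((K:ℝ) + 1) ^ (-q) := by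
        have hle : ∀ j ∈ Finset.range m, t (j+1) ≤ C * (w j - w (j+1)) := by
          intro j _
          have h := hstep ((K:ℝ) + j + 1) (by
            have h4 : (0:ℝ) ≤ (K:ℝ) := Nat.cast_nonneg K
            have h5 : (0:ℝ) ≤ (j:ℝ) := Nat.cast_nonneg j
            linarith)
          rw [ht_def, hw_def]
          convert h using 3 <;> push_cast <;> ring
        calc ∑ j ∈ Finset.range m, t (j+1) ≤ ∑ j ∈ Finset.range m, C * (w j - w (j+1)) :=
              Finset.sum_le_sum hle
        _ = C * ∑ j ∈ Finset.range m, (w j - w (j+1)) := by rw [Finset.mul_sum]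
        _ = C * (w 0 - w m) := by rw [Finset.sum_range_sub' w]
        _ ≤ C * ((K:ℝ) + 1) ^ (-q) := by
              have h2 := hw_nonneg m
              rw [hw0]
              nlinarith
      calc ∑ j ∈ Finset.range m, t (j+1) + t 0
          ≤ C * ((K:ℝ) + 1) ^ (-q) + ((K:ℝ) + 1) ^ (-q) := add_le_add h1 h0
      _ = (C + 1) * ((K:ℝ) + 1) ^ (-q) := by ring
  have hsummable : Summable t := summable_of_sum_range_le hterm_nonneg hpartial
  refine ⟨hsummable, ?_⟩
  exact Real.tsum_le_of_sum_range_le hterm_nonneg hpartial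

lemma mz_pointwise {p : ℝ} (hp : 0 < p) (hp1 : p < 1) :
    ∃ C : ℝ, 0 < C ∧ ∀ t : ℝ, 0 ≤ t →
      (Summable fun k : ℕ => min t (((k:ℝ)+1) ^ (1/p)) / ((k:ℝ)+1) ^ (1/p)) ∧
      ∑' k : ℕ, min t (((k:ℝ)+1) ^ (1/p)) / ((k:ℝ)+1) ^ (1/p) ≤ C * (1 + t ^ p) := by
  obtain ⟨D, hD, htail⟩ := mz_tail hp hp1
  set q : ℝ := 1/p - 1 with hq_def
  have hq : 0 < q := by
    have : 1 < 1/p := one_lt_one_div hp hp1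
    rw [hq_def]; linarith
  refine ⟨D + 1, by positivity, fun t ht => ?_⟩
  set b : ℕ → ℝ := fun k => ((k:ℝ)+1) ^ (1/p) with hb_def
  have hb_pos : ∀ k, 0 < b k := fun k => Real.rpow_pos_of_pos (by positivity) _
  set F : ℕ → ℝ := fun k => min t (b k) / b k with hF_def
  have hF_nonneg : ∀ k, 0 ≤ F k := fun k =>
    div_nonneg (le_min ht (hb_pos k).le) (hb_pos k).le
  have hF_le_one : ∀ k, F k ≤ 1 := fun k =>
    div_le_one_of_le₀ (min_le_right _ _) (hb_pos k).le
  have hF_le : ∀ k, F k ≤ t * ((k:ℝ)+1) ^ (-(1/p)) := by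
    intro k
    rw [hF_def]
    simp only
    rw [div_eq_mul_inv, ← Real.rpow_neg (by positivity : (0:ℝ) ≤ (k:ℝ)+1)]
    exact mul_le_mul_of_nonneg_right (min_le_left _ _) (Real.rpow_nonneg (by positivity) _)
  -- summability
  have hsum1 : Summable fun k : ℕ => ((k:ℝ) + 1) ^ (-(1/p)) := by
    apply ((htail 0).1).congr
    intro k; norm_num
  have hFsummable : Summable F :=
    Summable.of_nonneg_of_le hF_nonneg hF_le (hsum1.mul_left t)
  refine ⟨hFsummable, ?_⟩
  set M : ℕ := ⌊t ^ p⌋₊ with hM_def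
  have htp : 0 ≤ t ^ p := Real.rpow_nonneg ht _
  have hM_le : (M:ℝ) ≤ t ^ p := Nat.floor_le htp
  have hM_lt : t ^ p < (M:ℝ) + 1 := Nat.lt_floor_add_one _
  -- split
  rw [← hFsummable.sum_add_tsum_nat_add M]
  have hhead : ∑ k ∈ Finset.range M, F k ≤ t ^ p := by
    calc ∑ k ∈ Finset.range M, F k ≤ ∑ _k ∈ Finset.range M, (1:ℝ) :=
          Finset.sum_le_sum fun k _ => hF_le_one k
    _ = M := by simp
    _ ≤ t ^ p := hM_le
  have htail_eq : ∀ j : ℕ, F (j + M) = t * ((M:ℝ) + j + 1) ^ (-(1/p)) := by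
    intro j
    have hlt : t < b (j + M) := by
      have h1 : t ^ p < ((j + M : ℕ) : ℝ) + 1 := by
        push_cast
        have : (0:ℝ) ≤ (j:ℝ) := Nat.cast_nonneg j
        linarith
      have h2 : t = (t ^ p) ^ (1/p) := by
        rw [← Real.rpow_mul ht, mul_one_div, div_self (ne_of_gt hp), Real.rpow_one]
      rw [h2, hb_def]
      exact Real.rpow_lt_rpow htp h1 (by positivity)
    rw [hF_def]
    simp only
    rw [min_eq_left hlt.le, div_eq_mul_inv, hb_def,
      ← Real.rpow_neg (by positivity : (0:ℝ) ≤ ((j+M:ℕ):ℝ)+1)]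
    congr 2
    push_cast; ring
  have htail_le : ∑' j : ℕ, F (j + M) ≤ D * (1 + t ^ p) := by
    have hs := (htail M).1
    calc ∑' j : ℕ, F (j + M) = ∑' j : ℕ, t * ((M:ℝ) + j + 1) ^ (-(1/p)) := by
          exact tsum_congr htail_eq
    _ = t * ∑' j : ℕ, ((M:ℝ) + j + 1) ^ (-(1/p)) := tsum_mul_left
    _ ≤ t * (D * ((M:ℝ) + 1) ^ (-q)) := by
        apply mul_le_mul_of_nonneg_left _ ht
        simpa [hq_def] using (htail M).2
    _ ≤ D * (1 + t ^ p) := by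
        rcases le_or_gt t 1 with h1 | h1
        · have h2 : ((M:ℝ) + 1) ^ (-q) ≤ 1 := by
            apply Real.rpow_le_one_of_one_le_of_nonpos
            · have : (0:ℝ) ≤ (M:ℝ) := Nat.cast_nonneg M
              linarith
            · linarith
          have h3 : 0 ≤ ((M:ℝ) + 1) ^ (-q) := Real.rpow_nonneg (by positivity) _
          calc t * (D * ((M:ℝ) + 1) ^ (-q)) = D * (t * ((M:ℝ) + 1) ^ (-q)) := by ring
          _ ≤ D * 1 := mul_le_mul_of_nonneg_left (mul_le_one₀ h1 h3 h2) hD.le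
          _ ≤ D * (1 + t ^ p) := by nlinarith
        · have ht0 : 0 < t := by linarith
          have htp0 : 0 < t ^ p := Real.rpow_pos_of_pos ht0 _
          have h2 : ((M:ℝ) + 1) ^ (-q) ≤ (t ^ p) ^ (-q) :=
            Real.rpow_le_rpow_of_nonpos htp0 hM_lt.le (by linarith)
          have h3 : t * (t ^ p) ^ (-q) = t ^ p := by
            rw [← Real.rpow_mul ht]
            have h4 : t * t ^ (p * -q) = t ^ (1 + p * -q) := by
              rw [Real.rpow_add ht0, Real.rpow_one]
            rw [h4]
            congr 1
            rw [hq_def]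
            field_simp
            ring
          calc t * (D * ((M:ℝ) + 1) ^ (-q)) ≤ t * (D * (t ^ p) ^ (-q)) := by
                apply mul_le_mul_of_nonneg_left _ ht
                exact mul_le_mul_of_nonneg_left h2 hD.le
          _ = D * (t * (t ^ p) ^ (-q)) := by ring
          _ = D * t ^ p := by rw [h3]
          _ ≤ D * (1 + t ^ p) := by nlinarith
  calc ∑ k ∈ Finset.range M, F k + ∑' j : ℕ, F (j + M)
      ≤ t ^ p + D * (1 + t ^ p) := add_le_add hhead htail_le
  _ ≤ (D + 1) * (1 + t ^ p) := by nlinarith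

lemma mz_kronecker {p : ℝ} (hp : 0 < p) (hp1 : p < 1) (a : ℕ → ℝ) (ha : ∀ k, 0 ≤ a k)
    (hs : Summable fun k => a k / ((k:ℝ)+1) ^ (1/p)) :
    Tendsto (fun n : ℕ => (∑ k ∈ Finset.range n, a k) / (n:ℝ) ^ (1/p)) atTop (𝓝 0) := by
  have hr : (0:ℝ) < 1/p := by positivity
  have hbpos : ∀ k : ℕ, (0:ℝ) < ((k:ℝ)+1) ^ (1/p) :=
    fun k => Real.rpow_pos_of_pos (by positivity) _
  have hrt : Tendsto (fun n : ℕ => ((n:ℝ)) ^ (1/p)) atTop atTop :=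
    (tendsto_rpow_atTop hr).comp tendsto_natCast_atTop_atTop
  rw [Metric.tendsto_atTop]
  intro ε hε
  set P : ℕ → ℝ := fun n => ∑ k ∈ Finset.range n, a k / ((k:ℝ)+1) ^ (1/p) with hP_def
  have hcauchy := (hs.hasSum.tendsto_sum_nat).cauchySeq
  obtain ⟨K₀, hK₀⟩ := Metric.cauchySeq_iff'.1 hcauchy (ε/2) (by linarith)
  set C₀ : ℝ := ∑ k ∈ Finset.range K₀, a k with hC₀
  have hC₀nonneg : 0 ≤ C₀ := Finset.sum_nonneg fun k _ => ha k
  have hdivt : Tendsto (fun n : ℕ => C₀ / ((n:ℝ)) ^ (1/p)) atTop (𝓝 0) :=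
    Tendsto.div_atTop tendsto_const_nhds hrt
  obtain ⟨N₁, hN₁⟩ := (Metric.tendsto_atTop.1 hdivt) (ε/4) (by linarith)
  refine ⟨max (max K₀ N₁) 1, fun n hn => ?_⟩
  have hnK₀ : K₀ ≤ n := le_trans (le_trans (le_max_left _ _) (le_max_left _ _)) hn
  have hnN₁ : N₁ ≤ n := le_trans (le_trans (le_max_right _ _) (le_max_left _ _)) hn
  have hn1 : 1 ≤ n := le_trans (le_max_right _ _) hn
  have hnpos : (0:ℝ) < ((n:ℝ)) ^ (1/p) := Real.rpow_pos_of_pos (by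
    have : (1:ℝ) ≤ (n:ℝ) := by exact_mod_cast hn1
    linarith) _
  -- tail bound
  have htail : ∑ k ∈ Finset.Ico K₀ n, a k ≤ (ε/2) * ((n:ℝ)) ^ (1/p) := by
    have h1 : ∀ k ∈ Finset.Ico K₀ n, a k ≤ (a k / ((k:ℝ)+1) ^ (1/p)) * ((n:ℝ)) ^ (1/p) := by
      intro k hk
      have hkn : (k:ℝ) + 1 ≤ (n:ℝ) := by
        have : k < n := (Finset.mem_Ico.1 hk).2
        exact_mod_cast Nat.succ_le_of_lt this
      have hbk : ((k:ℝ)+1) ^ (1/p) ≤ ((n:ℝ)) ^ (1/p) :=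
        Real.rpow_le_rpow (by positivity) hkn hr.le
      calc a k = (a k / ((k:ℝ)+1) ^ (1/p)) * ((k:ℝ)+1) ^ (1/p) := by
            field_simp
      _ ≤ (a k / ((k:ℝ)+1) ^ (1/p)) * ((n:ℝ)) ^ (1/p) :=
            mul_le_mul_of_nonneg_left hbk (div_nonneg (ha k) (hbpos k).le)
    calc ∑ k ∈ Finset.Ico K₀ n, a k
        ≤ ∑ k ∈ Finset.Ico K₀ n, (a k / ((k:ℝ)+1) ^ (1/p)) * ((n:ℝ)) ^ (1/p) :=
          Finset.sum_le_sum h1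
    _ = (∑ k ∈ Finset.Ico K₀ n, a k / ((k:ℝ)+1) ^ (1/p)) * ((n:ℝ)) ^ (1/p) := by
          rw [Finset.sum_mul]
    _ = (P n - P K₀) * ((n:ℝ)) ^ (1/p) := by
          rw [hP_def]
          congr 1
          exact Finset.sum_Ico_eq_sub _ hnK₀
    _ ≤ (ε/2) * ((n:ℝ)) ^ (1/p) := by
          apply mul_le_mul_of_nonneg_right _ hnpos.le
          have := hK₀ n hnK₀
          rw [Real.dist_eq] at this
          have := abs_lt.1 this
          linarith [this.2]
  have hsplit : ∑ k ∈ Finset.range n, a k = C₀ + ∑ k ∈ Finset.Ico K₀ n, a k := by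
    rw [hC₀, ← Finset.sum_range_add_sum_Ico _ hnK₀]
  rw [Real.dist_eq, sub_zero]
  have hnum_nonneg : 0 ≤ ∑ k ∈ Finset.range n, a k := Finset.sum_nonneg fun k _ => ha k
  rw [abs_of_nonneg (div_nonneg hnum_nonneg hnpos.le)]
  have hbound : (∑ k ∈ Finset.range n, a k) / ((n:ℝ)) ^ (1/p)
      ≤ C₀ / ((n:ℝ)) ^ (1/p) + ε/2 := by
    rw [hsplit, add_div]
    have : (∑ k ∈ Finset.Ico K₀ n, a k) / ((n:ℝ)) ^ (1/p) ≤ ε/2 := by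
      rw [div_le_iff₀ hnpos]
      exact htail
    linarith
  have hC₀small : C₀ / ((n:ℝ)) ^ (1/p) < ε/4 + ε/4 := by
    have := hN₁ n hnN₁
    rw [Real.dist_eq, sub_zero] at this
    have h2 := abs_lt.1 this
    linarith [h2.2]
  linarith

lemma mz_tsum_meas_le {Ω : Type*} [MeasurableSpace Ω] (μ : Measure Ω) (g : Ω → ℝ)
    (hg : Measurable g) (hg0 : ∀ ω, 0 ≤ g ω) :
    ∑' k : ℕ, μ {ω | (k:ℝ) + 1 < g ω} ≤ ∫⁻ ω, ENNReal.ofReal (g ω) ∂μ := by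
  have hms : ∀ k : ℕ, MeasurableSet {ω | (k:ℝ)+1 < g ω} := fun k =>
    measurableSet_lt measurable_const hg
  calc ∑' k : ℕ, μ {ω | (k:ℝ)+1 < g ω}
      = ∑' k : ℕ, ∫⁻ ω, Set.indicator {ω | (k:ℝ)+1 < g ω} (fun _ => (1:ℝ≥0∞)) ω ∂μ :=
        tsum_congr fun k => (lintegral_indicator_one (hms k)).symm
  _ = ∫⁻ ω, ∑' k : ℕ, Set.indicator {ω | (k:ℝ)+1 < g ω} (fun _ => (1:ℝ≥0∞)) ω ∂μ :=
        (lintegral_tsum fun k => (measurable_one.indicator (hms k)).aemeasurable).symm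
  _ ≤ ∫⁻ ω, ENNReal.ofReal (g ω) ∂μ := by
        apply lintegral_mono
        intro ω
        simp only
        set M : ℕ := ⌊g ω⌋₊ with hM
        have h0 : ∀ k ∉ Finset.range M,
            Set.indicator {ω | (k:ℝ)+1 < g ω} (fun _ => (1:ℝ≥0∞)) ω = 0 := by
          intro k hk
          apply Set.indicator_of_notMem
          simp only [Set.mem_setOf_eq, not_lt]
          have h1 : g ω < (M:ℝ) + 1 := Nat.lt_floor_add_one _
          have h2 : (M:ℝ) ≤ (k:ℝ) := by
            exact_mod_cast Nat.le_of_not_lt (fun h => hk (Finset.mem_range.2 h))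
          linarith
        rw [tsum_eq_sum h0]
        calc ∑ k ∈ Finset.range M, Set.indicator {ω | (k:ℝ)+1 < g ω} (fun _ => (1:ℝ≥0∞)) ω
            ≤ ∑ _k ∈ Finset.range M, (1:ℝ≥0∞) :=
              Finset.sum_le_sum fun k _ => Set.indicator_apply_le (fun _ => le_rfl)
        _ = (M : ℝ≥0∞) := by simp
        _ ≤ ENNReal.ofReal (g ω) := by
              rw [← ENNReal.ofReal_natCast M]
              exact ENNReal.ofReal_le_ofReal (Nat.floor_le (hg0 ω))

set_option maxHeartbeats 1000000 in
theorem marcinkiewicz_zygmund_ergodic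
    {Ω : Type*} [MeasurableSpace Ω] [StandardBorelSpace Ω]
    (μ : Measure Ω) [IsProbabilityMeasure μ]
    (L : Ω → Ω) (hL : Ergodic L μ)
    (f : Ω → ℝ) (hf : Measurable f)
    (p : ℝ) (hp : 0 < p) (hp1 : p < 1)
    (hint : Integrable (fun ω => |f ω| ^ p) μ) :
    ∀ᵐ ω ∂μ, Tendsto
      (fun n : ℕ => (∑ k ∈ Finset.range n, f (L^[k] ω)) / (n : ℝ) ^ (1 / p))
      atTop (𝓝 0) := by
  have hmp : MeasurePreserving L μ μ := hL.toMeasurePreserving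
  have hr : (0:ℝ) < 1/p := by positivity
  set g : Ω → ℝ := fun ω => |f ω| ^ p with hg_def
  have hg_meas : Measurable g := by
    rw [hg_def]; measurability
  have hg0 : ∀ ω, 0 ≤ g ω := fun ω => Real.rpow_nonneg (abs_nonneg _) _
  have hglt : ∫⁻ ω, ENNReal.ofReal (g ω) ∂μ < ⊤ := hint.lintegral_lt_top
  have hiter : ∀ k : ℕ, MeasurePreserving (L^[k]) μ μ := fun k => hmp.iterate k
  -- Borel-Cantelli part
  set s : ℕ → Set Ω := fun k => L^[k] ⁻¹' {ω | (k:ℝ)+1 < g ω} with hs_def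
  have hs_sum : ∑' k, μ (s k) ≠ ⊤ := by
    have h1 : ∀ k, μ (s k) = μ {ω | (k:ℝ)+1 < g ω} := fun k =>
      (hiter k).measure_preimage
        (measurableSet_lt measurable_const hg_meas).nullMeasurableSet
    have h2 : ∑' k, μ (s k) ≤ ∫⁻ ω, ENNReal.ofReal (g ω) ∂μ := by
      calc ∑' k, μ (s k) = ∑' k : ℕ, μ {ω | (k:ℝ)+1 < g ω} := tsum_congr h1
      _ ≤ _ := mz_tsum_meas_le μ g hg_meas hg0
    exact (lt_of_le_of_lt h2 hglt).ne
  have hBC : ∀ᵐ ω ∂μ, ∀ᶠ k in atTop, ω ∉ s k := ae_eventually_notMem hs_sum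
  -- Summability part
  obtain ⟨C, hC, hptw⟩ := mz_pointwise hp hp1
  set b : ℕ → ℝ := fun k => ((k:ℝ)+1) ^ (1/p) with hb_def
  set F : ℕ → Ω → ℝ := fun k ω => min |f ω| (b k) / b k with hF_def
  have hb_pos : ∀ k, 0 < b k := fun k => Real.rpow_pos_of_pos (by positivity) _
  have hF_meas : ∀ k, Measurable (F k) := fun k =>
    (hf.abs.min measurable_const).div_const _
  have hF_nonneg : ∀ k ω, 0 ≤ F k ω := fun k ω =>
    div_nonneg (le_min (abs_nonneg _) (hb_pos k).le) (hb_pos k).le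
  have hFL_meas : ∀ k, Measurable fun ω => ENNReal.ofReal (F k (L^[k] ω)) := fun k =>
    ENNReal.measurable_ofReal.comp ((hF_meas k).comp (hiter k).measurable)
  have hkey : ∑' k, ∫⁻ ω, ENNReal.ofReal (F k (L^[k] ω)) ∂μ < ⊤ := by
    have h1 : ∀ k, ∫⁻ ω, ENNReal.ofReal (F k (L^[k] ω)) ∂μ
        = ∫⁻ ω, ENNReal.ofReal (F k ω) ∂μ := fun k =>
      (hiter k).lintegral_comp (ENNReal.measurable_ofReal.comp (hF_meas k))
    calc ∑' k, ∫⁻ ω, ENNReal.ofReal (F k (L^[k] ω)) ∂μ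
        = ∑' k, ∫⁻ ω, ENNReal.ofReal (F k ω) ∂μ := tsum_congr h1
    _ = ∫⁻ ω, ∑' k, ENNReal.ofReal (F k ω) ∂μ :=
        (lintegral_tsum fun k =>
          (ENNReal.measurable_ofReal.comp (hF_meas k)).aemeasurable).symm
    _ ≤ ∫⁻ ω, ENNReal.ofReal C * (1 + ENNReal.ofReal (g ω)) ∂μ := by
        apply lintegral_mono
        intro ω
        simp only
        have h2 := hptw |f ω| (abs_nonneg _)
        have h3 : ∑' k, ENNReal.ofReal (F k ω) = ENNReal.ofReal (∑' k, F k ω) :=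
          (ENNReal.ofReal_tsum_of_nonneg (fun k => hF_nonneg k ω) h2.1).symm
        rw [h3]
        calc ENNReal.ofReal (∑' k, F k ω) ≤ ENNReal.ofReal (C * (1 + g ω)) := by
              apply ENNReal.ofReal_le_ofReal
              exact h2.2
        _ = ENNReal.ofReal C * (1 + ENNReal.ofReal (g ω)) := by
              rw [ENNReal.ofReal_mul hC.le, ENNReal.ofReal_add zero_le_one (hg0 ω),
                ENNReal.ofReal_one]
    _ < ⊤ := by
        rw [lintegral_const_mul (f := fun ω => 1 + ENNReal.ofReal (g ω)) _
          (measurable_const.add hg_meas.ennreal_ofReal)]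
        apply ENNReal.mul_lt_top ENNReal.ofReal_lt_top
        rw [lintegral_add_left measurable_const]
        simp only [lintegral_const, measure_univ, mul_one, one_mul]
        exact ENNReal.add_lt_top.2 ⟨ENNReal.one_lt_top, hglt⟩
  have hae_sum : ∀ᵐ ω ∂μ, Summable fun k => F k (L^[k] ω) := by
    have hmeas_tsum : Measurable fun ω => ∑' k, ENNReal.ofReal (F k (L^[k] ω)) :=
      Measurable.ennreal_tsum hFL_meas
    have h2 : ∫⁻ ω, ∑' k, ENNReal.ofReal (F k (L^[k] ω)) ∂μ ≠ ⊤ := by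
      rw [lintegral_tsum fun k => (hFL_meas k).aemeasurable]
      exact hkey.ne
    filter_upwards [ae_lt_top hmeas_tsum h2] with ω hω
    have h3 := ENNReal.summable_toReal hω.ne
    apply h3.congr
    intro k
    exact ENNReal.toReal_ofReal (hF_nonneg k _)
  -- Conclusion
  filter_upwards [hBC, hae_sum] with ω hω1 hω2
  obtain ⟨K₀, hK₀⟩ := eventually_atTop.1 hω1
  set a : ℕ → ℝ := fun k => |f (L^[k] ω)| with ha_def
  have hab : ∀ k, K₀ ≤ k → a k ≤ b k := by
    intro k hk
    have h3 : g (L^[k] ω) ≤ (k:ℝ) + 1 := by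
      have h4 := hK₀ k hk
      rw [hs_def] at h4
      simp only [Set.mem_preimage, Set.mem_setOf_eq, not_lt] at h4
      exact h4
    have h5 : a k = (g (L^[k] ω)) ^ (1/p) := by
      rw [ha_def, hg_def]
      simp only
      rw [← Real.rpow_mul (abs_nonneg _), mul_one_div, div_self hp.ne', Real.rpow_one]
    rw [h5, hb_def]
    exact Real.rpow_le_rpow (hg0 _) h3 hr.le
  have hsum_a : Summable fun k => a k / b k := by
    have h5 : (fun j => a (j + K₀) / b (j + K₀))
        = fun j => F (j + K₀) (L^[j + K₀] ω) := by
      funext j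
      rw [hF_def, ha_def]
      simp only
      rw [min_eq_left (hab _ (Nat.le_add_left _ _))]
    have h6 : Summable fun j => F (j + K₀) (L^[j + K₀] ω) :=
      (summable_nat_add_iff K₀).2 hω2
    have h7 : Summable fun j => a (j + K₀) / b (j + K₀) := by rw [h5]; exact h6
    exact (summable_nat_add_iff K₀).1 h7
  have hkron := mz_kronecker hp hp1 a (fun k => abs_nonneg _) hsum_a
  apply squeeze_zero_norm _ hkron
  intro n
  rw [Real.norm_eq_abs, abs_div,
    abs_of_nonneg (Real.rpow_nonneg (Nat.cast_nonneg n) _)]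
  exact div_le_div_of_nonneg_right (Finset.abs_sum_le_sum_abs _ _) (Real.rpow_nonneg (Nat.cast_nonneg n) _)
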